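/- For every t ∈ ℤ₂ with t ≠ 0 and every r ∈ 8ℤ₂ such that 1 + t + r ≠ 0, the quadratic Hilbert symbol over ℚ₂ satisfies (−t, 1 + t + r) = 1. -/

import Mathlib

open scoped Classical

/-- The quadratic Hilbert symbol over `ℚ_p`: `1` if `z² = a·x² + b·y²` has a nonzero
solution, `-1` otherwise. -/
noncomputable def hilbertSym (p : ℕ) [Fact p.Prime] (a b : ℚ_[p]) : ℤ :=
  if ∃ x y z : ℚ_[p], (x, y, z) ≠ (0, 0, 0) ∧ z ^ 2 = a * x ^ 2 + b * y ^ 2 then 1 else -1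

lemma sq_of_one_add_eight (y : ℤ_[2]) : ∃ z : ℤ_[2], z ^ 2 = 1 + 8 * y := by
  set F : Polynomial ℤ_[2] := Polynomial.X ^ 2 - Polynomial.C (1 + 8 * y) with hF
  have hderiv : F.derivative = 2 * Polynomial.X := by
    simp [hF, Polynomial.derivative_pow]
    exact map_ofNat Polynomial.C 2
  have heval : F.eval 1 = -(8 * y) := by simp [hF]
  have hde : F.derivative.eval 1 = 2 := by rw [hderiv]; simp
  have h2 : ‖(2 : ℤ_[2])‖ = (1:ℝ)/2 := by
    have := @PadicInt.norm_p 2 ⟨Nat.prime_two⟩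
    simpa using this
  have h8 : ‖(8 : ℤ_[2])‖ = (1:ℝ)/8 := by
    have : (8 : ℤ_[2]) = 2 ^ 3 := by norm_num
    rw [this, norm_pow, h2]; norm_num
  have hnorm : ‖F.eval 1‖ < ‖F.derivative.eval 1‖ ^ 2 := by
    rw [heval, hde, norm_neg, h2]
    calc ‖(8:ℤ_[2]) * y‖ ≤ ‖(8:ℤ_[2])‖ * ‖y‖ := norm_mul_le _ _
      _ ≤ (1/8) * 1 := by rw [h8]; exact mul_le_mul_of_nonneg_left (PadicInt.norm_le_one y) (by norm_num)
      _ < ((1:ℝ)/2) ^ 2 := by norm_num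
  obtain ⟨z, hz, -⟩ := hensels_lemma hnorm
  refine ⟨z, ?_⟩
  have : z ^ 2 - (1 + 8 * y) = 0 := by simpa [hF] using hz
  linear_combination this

theorem hilbertSym_neg_t_one_add_t_add_r (t : ℤ_[2]) (ht : t ≠ 0)
    (r : ℚ_[2]) (hr : ∃ y : ℤ_[2], r = 8 * (y : ℚ_[2]))
    (h : (1 : ℚ_[2]) + (t : ℚ_[2]) + r ≠ 0) :
    hilbertSym 2 (-(t : ℚ_[2])) (1 + (t : ℚ_[2]) + r) = 1 := by
  obtain ⟨y, rfl⟩ := hr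
  obtain ⟨z, hz⟩ := sq_of_one_add_eight y
  rw [hilbertSym, if_pos]
  refine ⟨1, 1, (z : ℚ_[2]), by simp, ?_⟩
  have : ((z : ℚ_[2])) ^ 2 = 1 + 8 * (y : ℚ_[2]) := by
    have := congrArg (PadicInt.Coe.ringHom : ℤ_[2] →+* ℚ_[2]) hz
    push_cast at this ⊢
    exact this
  rw [this]; ring
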